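/- For every integer n ≥ 1, the learning-rate weights satisfy max_{1 ≤ i ≤ n} α_n^i ≤ 2H/n and Σ_{i=1}^n (α_n^i)² ≤ 2H/n. -/

import Mathlib

open scoped BigOperators

noncomputable section

/-- The per-step learning rate `α_t = (H+1)/(H+t)`. -/
def alphaT (H t : ℕ) : ℝ := (H + 1) / (H + t)

/-- The aggregated learning-rate weights `α_n^i`:
`α_0^0 = 1`, `α_n^0 = 0` for `n ≥ 1`, and `α_n^i = α_i ∏_{j=i+1}^n (1 - α_j)` for `1 ≤ i ≤ n`. -/
def alphaW (H n i : ℕ) : ℝ :=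
  if i = 0 then (if n = 0 then 1 else 0)
  else alphaT H i * ∏ j ∈ Finset.Icc (i + 1) n, (1 - alphaT H j)

lemma alphaT_pos (H t : ℕ) (hH : 1 ≤ H) : 0 < alphaT H t := by
  unfold alphaT
  have h1 : (0:ℝ) < (H:ℝ) + 1 := by positivity
  have h2 : (0:ℝ) < (H:ℝ) + t := by
    have : (1:ℝ) ≤ (H:ℝ) := by exact_mod_cast hH
    have : (0:ℝ) ≤ (t:ℝ) := by positivity
    linarith [(show (1:ℝ) ≤ (H:ℝ) by exact_mod_cast hH)]
  positivity

lemma alphaT_le_one (H t : ℕ) (hH : 1 ≤ H) (ht : 1 ≤ t) : alphaT H t ≤ 1 := by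
  unfold alphaT
  rw [div_le_one]
  · have : (1:ℝ) ≤ (t:ℝ) := by exact_mod_cast ht
    linarith
  · have : (1:ℝ) ≤ (H:ℝ) := by exact_mod_cast hH
    have : (0:ℝ) ≤ (t:ℝ) := by positivity
    linarith [(show (1:ℝ) ≤ (H:ℝ) by exact_mod_cast hH)]

lemma one_sub_alphaT_nonneg (H t : ℕ) (hH : 1 ≤ H) (ht : 1 ≤ t) : 0 ≤ 1 - alphaT H t := by
  linarith [alphaT_le_one H t hH ht]

lemma alphaW_nonneg (H n i : ℕ) (hH : 1 ≤ H) : 0 ≤ alphaW H n i := by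
  unfold alphaW
  split_ifs with h1 h2
  · norm_num
  · norm_num
  · apply mul_nonneg (le_of_lt (alphaT_pos H i hH))
    apply Finset.prod_nonneg
    intro j hj
    have hj1 : 1 ≤ j := by
      have := (Finset.mem_Icc.mp hj).1
      omega
    exact one_sub_alphaT_nonneg H j hH hj1

/-- The key monotone step: `α_n (1 - α_{n+1}) ≤ α_{n+1}`. -/
lemma alphaT_step (H n : ℕ) (hH : 1 ≤ H) (hn : 1 ≤ n) :
    alphaT H n * (1 - alphaT H (n + 1)) ≤ alphaT H (n + 1) := by
  unfold alphaT
  have hHr : (1:ℝ) ≤ (H:ℝ) := by exact_mod_cast hH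
  have hnr : (1:ℝ) ≤ (n:ℝ) := by exact_mod_cast hn
  have hd1 : (0:ℝ) < (H:ℝ) + n := by linarith
  have hd2 : (0:ℝ) < (H:ℝ) + (n + 1) := by push_cast; linarith
  push_cast
  have h : 1 - ((H:ℝ) + 1) / (H + (n + 1)) = (n:ℝ) / (H + (n+1)) := by
    field_simp
    ring
  rw [h, div_mul_div_comm, div_le_div_iff₀ (by positivity) hd2]
  nlinarith [mul_pos (mul_pos (show (0:ℝ) < (H:ℝ)+1 by positivity) hd2)
    (show (0:ℝ) < (H:ℝ) by linarith)]

/-- `α_n^i ≤ α_n` for `1 ≤ i ≤ n`. -/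
lemma alphaW_le_alphaT (H : ℕ) (hH : 1 ≤ H) :
    ∀ n i, 1 ≤ i → i ≤ n → alphaW H n i ≤ alphaT H n := by
  intro n
  induction n with
  | zero => intro i h1 h2; omega
  | succ n ih =>
    intro i h1 h2
    rcases Nat.lt_or_ge n i with hlt | hle
    · -- i = n + 1
      have : i = n + 1 := by omega
      subst this
      unfold alphaW
      rw [if_neg (by omega)]
      rw [Finset.Icc_eq_empty (by omega), Finset.prod_empty, mul_one]
    · -- i ≤ n
      have h1n : 1 ≤ n := le_trans h1 hle
      have key : alphaW H (n+1) i = alphaW H n i * (1 - alphaT H (n+1)) := by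
        unfold alphaW
        rw [if_neg (by omega), if_neg (by omega)]
        rw [Finset.prod_Icc_succ_top (by omega : i + 1 ≤ n + 1)]
        ring
      rw [key]
      have hnn : 0 ≤ 1 - alphaT H (n+1) := one_sub_alphaT_nonneg H (n+1) hH (by omega)
      calc alphaW H n i * (1 - alphaT H (n+1))
          ≤ alphaT H n * (1 - alphaT H (n+1)) := by
            apply mul_le_mul_of_nonneg_right (ih i h1 hle) hnn
        _ ≤ alphaT H (n+1) := alphaT_step H n hH h1n

lemma alphaT_le_bound (H n : ℕ) (hH : 1 ≤ H) (hn : 1 ≤ n) :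
    alphaT H n ≤ 2 * H / n := by
  unfold alphaT
  have hHr : (1:ℝ) ≤ (H:ℝ) := by exact_mod_cast hH
  have hnr : (1:ℝ) ≤ (n:ℝ) := by exact_mod_cast hn
  rw [div_le_div_iff₀ (by linarith) (by linarith)]
  nlinarith

lemma sum_alphaW_eq_one (H : ℕ) (hH : 1 ≤ H) :
    ∀ n, 1 ≤ n → ∑ i ∈ Finset.Icc 1 n, alphaW H n i = 1 := by
  intro n
  induction n with
  | zero => omega
  | succ n ih =>
    intro _
    rw [Finset.sum_Icc_succ_top (by omega : 1 ≤ n + 1)]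
    have hlast : alphaW H (n+1) (n+1) = alphaT H (n+1) := by
      unfold alphaW
      rw [if_neg (by omega), Finset.Icc_eq_empty (by omega), Finset.prod_empty, mul_one]
    rcases Nat.eq_zero_or_pos n with h0 | hpos
    · subst h0
      rw [show Finset.Icc 1 0 = (∅ : Finset ℕ) from Finset.Icc_eq_empty (by omega),
        Finset.sum_empty, zero_add, hlast]
      unfold alphaT
      push_cast
      have hpos : (0:ℝ) < (H:ℝ) + 1 := by positivity
      rw [div_self hpos.ne']
    · have hfac : ∀ i ∈ Finset.Icc 1 n,
          alphaW H (n+1) i = alphaW H n i * (1 - alphaT H (n+1)) := by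
        intro i hi
        obtain ⟨h1, h2⟩ := Finset.mem_Icc.mp hi
        unfold alphaW
        rw [if_neg (by omega), if_neg (by omega)]
        rw [Finset.prod_Icc_succ_top (by omega : i + 1 ≤ n + 1)]
        ring
      rw [Finset.sum_congr rfl hfac, ← Finset.sum_mul, ih hpos, one_mul, hlast]
      ring

/-- For every `n ≥ 1`, `max_{1 ≤ i ≤ n} α_n^i ≤ 2H/n` and `∑_{i=1}^n (α_n^i)² ≤ 2H/n`. -/
theorem alphaW_max_and_sq_sum_bounds (H : ℕ) (hH : 1 ≤ H) (n : ℕ) (hn : 1 ≤ n) :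
    (∀ i ∈ Finset.Icc 1 n, alphaW H n i ≤ 2 * H / n) ∧
    ∑ i ∈ Finset.Icc 1 n, (alphaW H n i) ^ 2 ≤ 2 * H / n := by
  have hmax : ∀ i ∈ Finset.Icc 1 n, alphaW H n i ≤ 2 * H / n := by
    intro i hi
    obtain ⟨h1, h2⟩ := Finset.mem_Icc.mp hi
    exact le_trans (alphaW_le_alphaT H hH n i h1 h2) (alphaT_le_bound H n hH hn)
  refine ⟨hmax, ?_⟩
  calc ∑ i ∈ Finset.Icc 1 n, (alphaW H n i) ^ 2
      ≤ ∑ i ∈ Finset.Icc 1 n, (2 * H / n) * alphaW H n i := by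
        apply Finset.sum_le_sum
        intro i hi
        rw [sq]
        exact mul_le_mul_of_nonneg_right (hmax i hi) (alphaW_nonneg H n i hH)
    _ = 2 * H / n := by
        rw [← Finset.mul_sum, sum_alphaW_eq_one H hH n hn, mul_one]
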